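/- Let Γ be a locally semicomplete commutative weakly distance-regular digraph and let q ≥ 5 with q ∈ T. If the configuration C(q) exists (i.e. p^{(1,q-2)}_{(1,q-1),(1,q-1)} ≠ 0 and (1,q-2) is pure), then for all vertices x,y,z with ∂̃(x,y)=(1,q-1) and ∂̃(y,z)=(1,q-2), one has ∂̃(x,z)=(2,q-2) (i.e. Γ_{1,q-1}Γ_{1,q-2}={Γ_{2,q-2}}). -/
import Mathlib


variable {V : Type*}

/-- There is a directed walk of length `n` from `x` to `y` in the digraph with arc relation `A`. -/
def HasWalk (A : V → V → Prop) : ℕ → V → V → Prop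
  | 0, x, y => x = y
  | n + 1, x, y => ∃ z, A x z ∧ HasWalk A n z y

/-- The distance `∂(x,y)`: the length of a shortest directed path from `x` to `y`. -/
noncomputable def ddist (A : V → V → Prop) (x y : V) : ℕ :=
  sInf {n : ℕ | HasWalk A n x y}

/-- The two-way distance `∂̃(x,y) = (∂(x,y), ∂(y,x))`. -/
noncomputable def tdist (A : V → V → Prop) (x y : V) : ℕ × ℕ :=
  (ddist A x y, ddist A y x)

/-- The two-way distance set `∂̃(Γ)`. -/
def tset (A : V → V → Prop) : Set (ℕ × ℕ) :=
  {d : ℕ × ℕ | ∃ x y : V, tdist A x y = d}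

/-- A (finite) weakly distance-regular digraph: a loopless strongly connected digraph
together with its intersection numbers `p h i j = p^{h}_{i,j}`, where
`p h i j = 0` by convention whenever one of `h`, `i`, `j` is not a two-way distance. -/
structure WDRDigraph (V : Type*) [Fintype V] where
  Adj : V → V → Prop
  loopless : ∀ v : V, ¬ Adj v v
  strongly_connected : ∀ x y : V, ∃ n : ℕ, HasWalk Adj n x y
  p : ℕ × ℕ → ℕ × ℕ → ℕ × ℕ → ℕ
  card_inter : ∀ (i j : ℕ × ℕ) (x y : V),
    {z : V | tdist Adj x z = i ∧ tdist Adj z y = j}.ncard = p (tdist Adj x y) i j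
  p_not_in : ∀ h i j : ℕ × ℕ,
    h ∉ tset Adj ∨ i ∉ tset Adj ∨ j ∉ tset Adj → p h i j = 0

variable [Fintype V]

/-- A weakly distance-regular digraph is commutative if `p^{h}_{i,j} = p^{h}_{j,i}`
for all two-way distances `h`, `i`, `j`. -/
def WDRDigraph.Commutative (G : WDRDigraph V) : Prop :=
  ∀ h i j : ℕ × ℕ, h ∈ tset G.Adj → i ∈ tset G.Adj → j ∈ tset G.Adj →
    G.p h i j = G.p h j i

/-- A digraph is semicomplete if any two distinct vertices are joined by at least one arc. -/
def Semicomplete (A : V → V → Prop) : Prop :=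
  ∀ x y : V, x ≠ y → A x y ∨ A y x

/-- A digraph is locally semicomplete if the out-neighbourhood and the in-neighbourhood of
every vertex induce semicomplete digraphs. -/
def LocallySemicomplete (A : V → V → Prop) : Prop :=
  ∀ x y z : V, y ≠ z →
    ((A x y → A x z → (A y z ∨ A z y)) ∧ (A y x → A z x → (A y z ∨ A z y)))

/-- A circuit of length `q`, encoded as a function `ZMod q → V` each of whose
consecutive pairs (cyclically) is an arc. -/
def IsCircuit (A : V → V → Prop) (q : ℕ) (c : ZMod q → V) : Prop :=
  ∀ i : ZMod q, A (c i) (c (i + 1))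

/-- The arc `(x, y)` (of type `(1, q-1)`) is pure: every circuit of length `q`
containing it consists of arcs of type `(1, q-1)`. -/
def PureArc (A : V → V → Prop) (q : ℕ) (x y : V) : Prop :=
  ∀ c : ZMod q → V, IsCircuit A q c → c 0 = x → c 1 = y →
    ∀ i : ZMod q, tdist A (c i) (c (i + 1)) = (1, q - 1)

/-- `(1, q-1)` is pure: every arc of type `(1, q-1)` is pure. -/
def TypePure (A : V → V → Prop) (q : ℕ) : Prop :=
  ∀ x y : V, tdist A x y = (1, q - 1) → PureArc A q x y

/-- `(1, q-1)` is mixed: some arc of type `(1, q-1)` is not pure. -/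
def TypeMixed (A : V → V → Prop) (q : ℕ) : Prop :=
  ∃ x y : V, tdist A x y = (1, q - 1) ∧ ¬ PureArc A q x y

/-- The number `k_i` of vertices at two-way distance `i` from `x`
(independent of `x` in a weakly distance-regular digraph). -/
noncomputable def kval (A : V → V → Prop) (i : ℕ × ℕ) (x : V) : ℕ :=
  {y : V | tdist A x y = i}.ncard

namespace St16

variable {A : V → V → Prop}

lemma hasWalk_zero {x y : V} (h : x = y) : HasWalk A 0 x y := h

lemma hasWalk_one {x y : V} (h : A x y) : HasWalk A 1 x y := ⟨y, h, rfl⟩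

lemma hasWalk_trans : ∀ {m : ℕ} {a b : V}, HasWalk A m a b →
    ∀ {n : ℕ} {c : V}, HasWalk A n b c → HasWalk A (m + n) a c := by
  intro m
  induction m with
  | zero =>
    intro a b hab n c hbc
    have : a = b := hab
    subst this
    simpa [Nat.zero_add] using hbc
  | succ m ih =>
    intro a b hab n c hbc
    obtain ⟨t, hat, htb⟩ := hab
    have : HasWalk A (m + n) t c := ih htb hbc
    have e : m + 1 + n = (m + n) + 1 := by omega
    rw [e]
    exact ⟨t, hat, this⟩

lemma ddist_le {n : ℕ} {a b : V} (h : HasWalk A n a b) : ddist A a b ≤ n :=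
  Nat.sInf_le h

lemma exists_walk (hconn : ∀ a b : V, ∃ n, HasWalk A n a b) (a b : V) :
    HasWalk A (ddist A a b) a b :=
  Nat.sInf_mem (hconn a b)

lemma ddist_self (a : V) : ddist A a a = 0 :=
  Nat.eq_zero_of_le_zero (ddist_le (hasWalk_zero rfl))

lemma ddist_triangle (hconn : ∀ a b : V, ∃ n, HasWalk A n a b) (a b c : V) :
    ddist A a c ≤ ddist A a b + ddist A b c :=
  ddist_le (hasWalk_trans (exists_walk hconn a b) (exists_walk hconn b c))

lemma adj_of_ddist_one (hconn : ∀ a b : V, ∃ n, HasWalk A n a b) {a b : V}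
    (h : ddist A a b = 1) : A a b := by
  have hw := exists_walk hconn a b
  rw [h] at hw
  obtain ⟨t, hat, htb⟩ := hw
  have : t = b := htb
  subst this
  exact hat

lemma eq_of_ddist_zero (hconn : ∀ a b : V, ∃ n, HasWalk A n a b) {a b : V}
    (h : ddist A a b = 0) : a = b := by
  have hw := exists_walk hconn a b
  rw [h] at hw
  exact hw

lemma tdist_eq_iff {a b : V} {p : ℕ × ℕ} :
    tdist A a b = p ↔ ddist A a b = p.1 ∧ ddist A b a = p.2 := by
  simp [tdist, Prod.ext_iff]

lemma exists_path_fun : ∀ {n : ℕ} {a b : V}, HasWalk A n a b →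
    ∃ g : ℕ → V, g 0 = a ∧ g n = b ∧ ∀ i < n, A (g i) (g (i + 1)) := by
  intro n
  induction n with
  | zero =>
    intro a b h
    have : a = b := h
    subst this
    exact ⟨fun _ => a, rfl, rfl, fun i hi => absurd hi (by omega)⟩
  | succ n ih =>
    intro a b h
    obtain ⟨t, hat, htb⟩ := h
    obtain ⟨g, hg0, hgn, hgarc⟩ := ih htb
    refine ⟨fun i => if i = 0 then a else g (i - 1), by simp, ?_, ?_⟩
    · simp only [Nat.succ_ne_zero, if_neg, Nat.add_sub_cancel]
      exact hgn
    · intro i hi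
      by_cases h0 : i = 0
      · subst h0
        simp only [if_pos rfl, if_neg (Nat.one_ne_zero), Nat.sub_self]
        rw [hg0]
        exact hat
      · simp only [if_neg h0, if_neg (by omega : i + 1 ≠ 0)]
        have e : i - 1 + 1 = i := by omega
        have := hgarc (i - 1) (by omega)
        rw [e] at this
        rwa [(by omega : i + 1 - 1 = i)]

lemma walk_of_fun (g : ℕ → V) {n : ℕ} (harc : ∀ i < n, A (g i) (g (i + 1))) :
    ∀ i j, i ≤ j → j ≤ n → HasWalk A (j - i) (g i) (g j) := by
  intro i j hij hjn
  induction j, hij using Nat.le_induction with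
  | base => simpa using (hasWalk_zero rfl : HasWalk A 0 (g i) (g i))
  | succ j hij ih =>
    have hw : HasWalk A (j - i) (g i) (g j) := ih (by omega)
    have e : j + 1 - i = (j - i) + 1 := by omega
    rw [e]
    exact hasWalk_trans hw (hasWalk_one (harc j (by omega)))

lemma pure_apply {q' : ℕ} (hq' : 2 ≤ q') {a b : V}
    (hp : PureArc A q' a b) (w : ℕ → V) (hw0 : w 0 = a) (hw1 : w 1 = b)
    (harc : ∀ j < q', A (w j) (w ((j + 1) % q'))) :
    ∀ j < q', tdist A (w j) (w ((j + 1) % q')) = (1, q' - 1) := by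
  haveI : NeZero q' := ⟨by omega⟩
  have hval1 : (1 : ZMod q').val = 1 := by
    rw [← Nat.cast_one, ZMod.val_natCast_of_lt (by omega)]
  set c : ZMod q' → V := fun i => w i.val with hc
  have hsucc : ∀ i : ZMod q', c (i + 1) = w ((i.val + 1) % q') := by
    intro i
    show w (i + 1).val = w ((i.val + 1) % q')
    rw [ZMod.val_add, hval1]
  have hcirc : IsCircuit A q' c := by
    intro i
    rw [hsucc i]
    exact harc i.val (ZMod.val_lt i)
  have h0 : c 0 = a := by
    show w (0 : ZMod q').val = a
    rw [ZMod.val_zero, hw0]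
  have h1 : c 1 = b := by
    show w (1 : ZMod q').val = b
    rw [hval1, hw1]
  have hall := hp c hcirc h0 h1
  intro j hj
  have hj' : ((j : ZMod q')).val = j := ZMod.val_natCast_of_lt hj
  have hthis := hall (j : ZMod q')
  rw [hsucc, hj'] at hthis
  have hcj : c (j : ZMod q') = w j := by
    show w ((j : ZMod q')).val = w j
    rw [hj']
  rwa [hcj] at hthis

/-- Key counting kill: if some vertex `x₀` has `tdist x₀ z = (1, q-2)` and the intersection
number `p^{(1,q-2)}_{(1,q-1),(1,q-2)}` is nonzero, we get a contradiction. -/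
lemma chain_kill (G : WDRDigraph V) (hls : LocallySemicomplete G.Adj)
    (q : ℕ) (hq : 5 ≤ q) (z x₀ : V) (hx₀ : tdist G.Adj x₀ z = (1, q - 2))
    (hP1 : G.p (1, q - 2) (1, q - 1) (1, q - 2) ≠ 0) : False := by
  have hconn := G.strongly_connected
  have step : ∀ a : V, tdist G.Adj a z = (1, q - 2) →
      ∃ b : V, tdist G.Adj a b = (1, q - 1) ∧ tdist G.Adj b z = (1, q - 2) := by
    intro a ha
    have hcard := G.card_inter (1, q - 1) (1, q - 2) a z
    rw [ha] at hcard
    have hne : ({v : V | tdist G.Adj a v = (1, q - 1) ∧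
        tdist G.Adj v z = (1, q - 2)}).Nonempty := by
      apply Set.nonempty_of_ncard_ne_zero
      rw [hcard]
      exact hP1
    obtain ⟨b, hb1, hb2⟩ := hne
    exact ⟨b, hb1, hb2⟩
  have fstep : ∀ a : {a : V // tdist G.Adj a z = (1, q - 2)},
      ∃ b : {a : V // tdist G.Adj a z = (1, q - 2)}, tdist G.Adj a.1 b.1 = (1, q - 1) := by
    intro a
    obtain ⟨b, hb1, hb2⟩ := step a.1 a.2
    exact ⟨⟨b, hb2⟩, hb1⟩
  choose F hF using fstep
  set vv : ℕ → V := fun n => (F^[n] ⟨x₀, hx₀⟩).1 with hvv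
  have hinv : ∀ n, tdist G.Adj (vv n) z = (1, q - 2) := fun n => (F^[n] ⟨x₀, hx₀⟩).2
  have harc : ∀ n, tdist G.Adj (vv n) (vv (n + 1)) = (1, q - 1) := by
    intro n
    have e : F^[n + 1] ⟨x₀, hx₀⟩ = F (F^[n] ⟨x₀, hx₀⟩) := Function.iterate_succ_apply' F n _
    have e2 : vv (n + 1) = (F (F^[n] ⟨x₀, hx₀⟩)).1 := by rw [hvv]; simp only [e]
    rw [e2]
    exact hF _
  obtain ⟨a, b, hab, heq⟩ := Finite.exists_ne_map_eq_of_infinite vv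
  set S : Set ℕ := {d | 0 < d ∧ ∃ m, vv (m + d) = vv m} with hS
  have hSne : S.Nonempty := by
    rcases Nat.lt_or_ge a b with h | h
    · exact ⟨b - a, by omega, a, by rw [(by omega : a + (b - a) = b)]; exact heq.symm⟩
    · have h' : b < a := by omega
      exact ⟨a - b, by omega, b, by rw [(by omega : b + (a - b) = a)]; exact heq⟩
  set d0 := sInf S with hd0
  obtain ⟨hd0pos, k, hk⟩ : 0 < d0 ∧ ∃ m, vv (m + d0) = vv m := Nat.sInf_mem hSne
  have adj_arc : ∀ n, G.Adj (vv n) (vv (n + 1)) := by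
    intro n
    exact adj_of_ddist_one hconn (tdist_eq_iff.mp (harc n)).1
  have rev_dist : ∀ n, ddist G.Adj (vv (n + 1)) (vv n) = q - 1 :=
    fun n => (tdist_eq_iff.mp (harc n)).2
  have adj_z : ∀ n, G.Adj (vv n) z :=
    fun n => adj_of_ddist_one hconn (tdist_eq_iff.mp (hinv n)).1
  have hd0two : 2 ≤ d0 := by
    by_contra hlt
    have hd1 : d0 = 1 := by omega
    have hrd := rev_dist k
    rw [(by omega : k + 1 = k + d0), hk, ddist_self] at hrd
    omega
  have hdistinct : ∀ i j : ℕ, i < j → j - i < d0 → vv i ≠ vv j := by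
    intro i j hij hlt heq'
    have : (j - i) ∈ S := ⟨by omega, i, by rw [(by omega : i + (j - i) = j)]; exact heq'.symm⟩
    exact Nat.notMem_of_lt_sInf (by omega) this
  have claim : ∀ g, 1 ≤ g → g ≤ d0 - 1 → ∀ i j, j = i + g → G.Adj (vv i) (vv j) := by
    intro g
    induction g with
    | zero => omega
    | succ g ih =>
      intro _ hle i j hij
      rcases Nat.eq_zero_or_pos g with hg0 | hgpos
      · subst hg0
        rw [hij]
        exact adj_arc i
      · have hne : vv i ≠ vv j := hdistinct i j (by omega) (by omega)
        have hdir := (hls z (vv i) (vv j) hne).2 (adj_z i) (adj_z j)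
        rcases hdir with h | h
        · exact h
        · exfalso
          have harc2 : G.Adj (vv (i + 1)) (vv j) := ih hgpos (by omega) (i + 1) j (by omega)
          have hw2 : HasWalk G.Adj 2 (vv (i + 1)) (vv i) := ⟨vv j, harc2, hasWalk_one h⟩
          have hle2 := ddist_le hw2
          rw [rev_dist i] at hle2
          omega
  have hfinal : G.Adj (vv (k + 1)) (vv (k + d0)) :=
    claim (d0 - 1) (by omega) le_rfl (k + 1) (k + d0) (by omega)
  rw [hk] at hfinal
  have hle1 := ddist_le (hasWalk_one hfinal)
  rw [rev_dist k] at hle1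
  omega

end St16

/-- in a locally semicomplete commutative weakly distance-regular digraph, if
`q ≥ 5`, `q ∈ T`, and C(q) exists (i.e. `p^{(1,q-2)}_{(1,q-1),(1,q-1)} ≠ 0` and `(1,q-2)` is
pure), then `Γ_{1,q-1}Γ_{1,q-2} = {Γ_{2,q-2}}`. -/
theorem statement16 [Nonempty V] (G : WDRDigraph V)
    (hls : LocallySemicomplete G.Adj) (hcomm : G.Commutative)
    (q : ℕ) (hq : 5 ≤ q)
    (hqT : ((1, q - 1) : ℕ × ℕ) ∈ tset G.Adj)
    (hC : G.p (1, q - 2) (1, q - 1) (1, q - 1) ≠ 0 ∧ TypePure G.Adj (q - 1)) :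
    ∀ x y z : V, tdist G.Adj x y = (1, q - 1) → tdist G.Adj y z = (1, q - 2) →
      tdist G.Adj x z = (2, q - 2) := by
  obtain ⟨hP0, hpure⟩ := hC
  intro x y z hxy hyz
  have hconn := G.strongly_connected
  have hxy1 : ddist G.Adj x y = 1 := (St16.tdist_eq_iff.mp hxy).1
  have hyx : ddist G.Adj y x = q - 1 := (St16.tdist_eq_iff.mp hxy).2
  have hyz1 : ddist G.Adj y z = 1 := (St16.tdist_eq_iff.mp hyz).1
  have hzy : ddist G.Adj z y = q - 2 := (St16.tdist_eq_iff.mp hyz).2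
  have axy : G.Adj x y := St16.adj_of_ddist_one hconn hxy1
  have ayz : G.Adj y z := St16.adj_of_ddist_one hconn hyz1
  have hzx_ge : q - 2 ≤ ddist G.Adj z x := by
    have htri := St16.ddist_triangle hconn y z x
    rw [hyx, hyz1] at htri
    omega
  -- shortest path from z to y
  have hwzy : HasWalk G.Adj (q - 2) z y := by
    have hw := St16.exists_walk hconn z y
    rwa [hzy] at hw
  obtain ⟨u, hu0, huend, huarc⟩ := St16.exists_path_fun hwzy
  have hzu : ∀ i, i ≤ q - 2 → ddist G.Adj z (u i) ≤ i := by
    intro i hi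
    have hw := St16.walk_of_fun u huarc 0 i (by omega) hi
    rw [hu0] at hw
    have := St16.ddist_le hw
    simpa using this
  -- purity of (y,z) applied to the circuit y → z → u 1 → ... → u (q-3) → y
  have hpyz : PureArc G.Adj (q - 1) y z := by
    apply hpure
    rw [hyz, (by omega : q - 1 - 1 = q - 2)]
  have hzu1 : tdist G.Adj z (u 1) = (1, q - 2) := by
    set w1 : ℕ → V := fun j => if j = 0 then y else u (j - 1) with hw1def
    have hw1arc : ∀ j < q - 1, G.Adj (w1 j) (w1 ((j + 1) % (q - 1))) := by
      intro j hj
      by_cases h0 : j = 0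
      · subst h0
        rw [(Nat.mod_eq_of_lt (by omega) : (0 + 1) % (q - 1) = 1)]
        have e0 : w1 0 = y := by simp [hw1def]
        have e1 : w1 1 = z := by
          simp only [hw1def]
          rw [if_neg (by omega : (1 : ℕ) ≠ 0), (by omega : 1 - 1 = 0), hu0]
        rw [e0, e1]
        exact ayz
      · by_cases hl : j = q - 2
        · subst hl
          rw [(by rw [(by omega : q - 2 + 1 = q - 1)]; exact Nat.mod_self _ :
            (q - 2 + 1) % (q - 1) = 0)]
          have e1 : w1 (q - 2) = u (q - 3) := by
            simp only [hw1def]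
            rw [if_neg (by omega : q - 2 ≠ 0), (by omega : q - 2 - 1 = q - 3)]
          have e0 : w1 0 = y := by simp [hw1def]
          rw [e1, e0]
          have harc3 := huarc (q - 3) (by omega)
          rwa [(by omega : q - 3 + 1 = q - 2), huend] at harc3
        · rw [(Nat.mod_eq_of_lt (by omega) : (j + 1) % (q - 1) = j + 1)]
          have e1 : w1 j = u (j - 1) := by simp only [hw1def]; rw [if_neg h0]
          have e2 : w1 (j + 1) = u j := by
            simp only [hw1def]
            rw [if_neg (by omega : j + 1 ≠ 0), (by omega : j + 1 - 1 = j)]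
          rw [e1, e2]
          have harcj := huarc (j - 1) (by omega)
          rwa [(by omega : j - 1 + 1 = j)] at harcj
    have hC1 := St16.pure_apply (by omega) hpyz w1 (by simp [hw1def])
      (by simp only [hw1def]
          rw [if_neg (by omega : (1 : ℕ) ≠ 0), (by omega : 1 - 1 = 0), hu0]) hw1arc
    have h1 := hC1 1 (by omega)
    rw [(Nat.mod_eq_of_lt (by omega) : (1 + 1) % (q - 1) = 2)] at h1
    have e1 : w1 1 = z := by
      simp only [hw1def]
      rw [if_neg (by omega : (1 : ℕ) ≠ 0), (by omega : 1 - 1 = 0), hu0]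
    have e2 : w1 2 = u 1 := by
      simp only [hw1def]
      rw [if_neg (by omega : (2 : ℕ) ≠ 0), (by omega : 2 - 1 = 1)]
    rw [e1, e2, (by omega : q - 1 - 1 = q - 2)] at h1
    exact h1
  -- u (q-3) → x
  have hxneu : x ≠ u (q - 3) := by
    intro he
    have hle3 := hzu (q - 3) (by omega)
    rw [← he] at hle3
    omega
  have hu3y : G.Adj (u (q - 3)) y := by
    have harc3 := huarc (q - 3) (by omega)
    rwa [(by omega : q - 3 + 1 = q - 2), huend] at harc3
  have hu3x : G.Adj (u (q - 3)) x := by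
    by_contra hno
    have hx3 : G.Adj x (u (q - 3)) := by
      rcases (hls y (u (q - 3)) x (Ne.symm hxneu)).2 hu3y axy with h | h
      · exact absurd h hno
      · exact h
    have hdesc : ∀ m, m ≤ q - 4 → G.Adj x (u (q - 3 - m)) := by
      intro m
      induction m with
      | zero => intro _; simpa using hx3
      | succ m ih =>
        intro hm
        have prev := ih (by omega)
        have harc_i : G.Adj (u (q - 3 - (m + 1))) (u (q - 3 - m)) := by
          have h := huarc (q - 3 - (m + 1)) (by omega)
          rwa [(by omega : q - 3 - (m + 1) + 1 = q - 3 - m)] at h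
        have hne2 : u (q - 3 - (m + 1)) ≠ x := by
          intro he
          have hle4 := hzu (q - 3 - (m + 1)) (by omega)
          rw [he] at hle4
          omega
        rcases (hls (u (q - 3 - m)) (u (q - 3 - (m + 1))) x hne2).2 harc_i prev with h | h
        · exfalso
          have hwz : HasWalk G.Adj (q - 3 - (m + 1)) (u 0) (u (q - 3 - (m + 1))) := by
            have hw := St16.walk_of_fun u huarc 0 (q - 3 - (m + 1)) (by omega) (by omega)
            simpa using hw
          have hw' : HasWalk G.Adj ((q - 3 - (m + 1)) + 1) (u 0) x :=
            St16.hasWalk_trans hwz (St16.hasWalk_one h)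
          rw [hu0] at hw'
          have := St16.ddist_le hw'
          omega
        · exact h
    have hxu1 : G.Adj x (u 1) := by
      have h := hdesc (q - 4) le_rfl
      rwa [(by omega : q - 3 - (q - 4) = 1)] at h
    have haxz : G.Adj x z := by
      have hzne : z ≠ x := by
        intro he
        rw [he, St16.ddist_self] at hzx_ge
        omega
      have hzu1arc : G.Adj z (u 1) := by
        have h := huarc 0 (by omega)
        rwa [hu0] at h
      rcases (hls (u 1) z x hzne).2 hzu1arc hxu1 with h | h
      · exfalso
        have := St16.ddist_le (St16.hasWalk_one h)
        omega
      · exact h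
    -- the C(q)-split f of the pure arc (z, u 1)
    have hcard := G.card_inter (1, q - 1) (1, q - 1) z (u 1)
    rw [hzu1] at hcard
    have hne3 : ({v : V | tdist G.Adj z v = (1, q - 1) ∧
        tdist G.Adj v (u 1) = (1, q - 1)}).Nonempty := by
      apply Set.nonempty_of_ncard_ne_zero
      rw [hcard]
      exact hP0
    obtain ⟨f, hzf, hfu1⟩ := hne3
    have hzf1 : ddist G.Adj z f = 1 := (St16.tdist_eq_iff.mp hzf).1
    have hfz : ddist G.Adj f z = q - 1 := (St16.tdist_eq_iff.mp hzf).2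
    have hfu1a : G.Adj f (u 1) :=
      St16.adj_of_ddist_one hconn (St16.tdist_eq_iff.mp hfu1).1
    have hu1f : ddist G.Adj (u 1) f = q - 1 := (St16.tdist_eq_iff.mp hfu1).2
    have hfnex : f ≠ x := by
      intro he
      rw [he] at hzf1
      omega
    have hxf : G.Adj x f := by
      rcases (hls (u 1) f x hfnex).2 hfu1a hxu1 with h | h
      · exfalso
        have hw2 : HasWalk G.Adj 2 f z := ⟨x, h, St16.hasWalk_one haxz⟩
        have := St16.ddist_le hw2
        omega
      · exact h
    have hynef : y ≠ f := by
      intro he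
      rw [← he] at hzf1
      omega
    have hyf : G.Adj y f := by
      rcases (hls x y f hynef).1 axy hxf with h | h
      · exact h
      · exfalso
        have hw2 : HasWalk G.Adj 2 f z := ⟨y, h, St16.hasWalk_one ayz⟩
        have := St16.ddist_le hw2
        omega
    -- the killing walk u 1 → ... → u (q-3) → y → f of length q-2
    have hw14 : HasWalk G.Adj (q - 4) (u 1) (u (q - 3)) := by
      have hw := St16.walk_of_fun u huarc 1 (q - 3) (by omega) (by omega)
      rwa [(by omega : q - 3 - 1 = q - 4)] at hw
    have hwy : HasWalk G.Adj (q - 3) (u 1) y := by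
      have hw := St16.hasWalk_trans hw14 (St16.hasWalk_one hu3y)
      rwa [(by omega : q - 4 + 1 = q - 3)] at hw
    have hwf : HasWalk G.Adj (q - 2) (u 1) f := by
      have hw := St16.hasWalk_trans hwy (St16.hasWalk_one hyf)
      rwa [(by omega : q - 3 + 1 = q - 2)] at hw
    have := St16.ddist_le hwf
    omega
  -- the second coordinate
  have hzx : ddist G.Adj z x = q - 2 := by
    have hw3 : HasWalk G.Adj (q - 3) z (u (q - 3)) := by
      have hw := St16.walk_of_fun u huarc 0 (q - 3) (by omega) (by omega)
      rw [hu0] at hw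
      simpa using hw
    have hw4 : HasWalk G.Adj (q - 2) z x := by
      have hw := St16.hasWalk_trans hw3 (St16.hasWalk_one hu3x)
      rwa [(by omega : q - 3 + 1 = q - 2)] at hw
    have := St16.ddist_le hw4
    omega
  -- the first coordinate: no arc from x to z
  have hnxz : ¬ G.Adj x z := by
    intro haxz
    have hpz1 : PureArc G.Adj (q - 1) z (u 1) := by
      apply hpure
      rw [hzu1, (by omega : q - 1 - 1 = q - 2)]
    set w2 : ℕ → V := fun j => if j = q - 2 then x else u j with hw2def
    have hw2arc : ∀ j < q - 1, G.Adj (w2 j) (w2 ((j + 1) % (q - 1))) := by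
      intro j hj
      by_cases hl : j = q - 2
      · subst hl
        rw [(by rw [(by omega : q - 2 + 1 = q - 1)]; exact Nat.mod_self _ :
          (q - 2 + 1) % (q - 1) = 0)]
        have e1 : w2 (q - 2) = x := by simp [hw2def]
        have e0 : w2 0 = z := by
          simp only [hw2def]
          rw [if_neg (by omega : (0 : ℕ) ≠ q - 2), hu0]
        rw [e1, e0]
        exact haxz
      · by_cases h3 : j = q - 3
        · subst h3
          rw [(Nat.mod_eq_of_lt (by omega) : (q - 3 + 1) % (q - 1) = q - 3 + 1),
            (by omega : q - 3 + 1 = q - 2)]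
          have e1 : w2 (q - 3) = u (q - 3) := by
            simp only [hw2def]
            rw [if_neg (by omega : q - 3 ≠ q - 2)]
          have e2 : w2 (q - 2) = x := by simp [hw2def]
          rw [e1, e2]
          exact hu3x
        · rw [(Nat.mod_eq_of_lt (by omega) : (j + 1) % (q - 1) = j + 1)]
          have e1 : w2 j = u j := by
            simp only [hw2def]
            rw [if_neg hl]
          have e2 : w2 (j + 1) = u (j + 1) := by
            simp only [hw2def]
            rw [if_neg (by omega : j + 1 ≠ q - 2)]
          rw [e1, e2]
          exact huarc j (by omega)
    have hC2 := St16.pure_apply (by omega) hpz1 w2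
      (by simp only [hw2def]
          rw [if_neg (by omega : (0 : ℕ) ≠ q - 2), hu0])
      (by simp only [hw2def]
          rw [if_neg (by omega : (1 : ℕ) ≠ q - 2)]) hw2arc
    have h2 := hC2 (q - 2) (by omega)
    rw [(by rw [(by omega : q - 2 + 1 = q - 1)]; exact Nat.mod_self _ :
      (q - 2 + 1) % (q - 1) = 0)] at h2
    have e1 : w2 (q - 2) = x := by simp [hw2def]
    have e0 : w2 0 = z := by
      simp only [hw2def]
      rw [if_neg (by omega : (0 : ℕ) ≠ q - 2), hu0]
    rw [e1, e0, (by omega : q - 1 - 1 = q - 2)] at h2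
    -- h2 : tdist x z = (1, q-2); now P1 ≠ 0
    have hcard := G.card_inter (1, q - 1) (1, q - 2) x z
    rw [h2] at hcard
    have hP1 : G.p (1, q - 2) (1, q - 1) (1, q - 2) ≠ 0 := by
      rw [← hcard]
      have hy_mem : y ∈ {v : V | tdist G.Adj x v = (1, q - 1) ∧
          tdist G.Adj v z = (1, q - 2)} := ⟨hxy, hyz⟩
      exact ne_of_gt ((Set.ncard_pos (Set.toFinite _)).mpr ⟨y, hy_mem⟩)
    exact St16.chain_kill G hls q hq z x h2 hP1
  -- wrap up
  have hxz2 : ddist G.Adj x z = 2 := by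
    have hle : ddist G.Adj x z ≤ 2 := St16.ddist_le ⟨y, axy, St16.hasWalk_one ayz⟩
    have hne0 : ddist G.Adj x z ≠ 0 := by
      intro h
      have hxeqz := St16.eq_of_ddist_zero hconn h
      rw [hxeqz, St16.ddist_self] at hzx
      omega
    have hne1 : ddist G.Adj x z ≠ 1 := fun h => hnxz (St16.adj_of_ddist_one hconn h)
    omega
  rw [St16.tdist_eq_iff]
  exact ⟨hxz2, hzx⟩
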